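/- Let λ₁, λ₂, μ > 0 with λ₁ + λ₂ + μ = 1 and both ray conditions ρ⁻¹λ₁ > λ and ρ⁻¹λ₂ > λ hold, where λ = λ₁+λ₂ < μ and ρ = λ/μ. Let β_E = √(μ/λ₂) and let α_E satisfy λ₁α_E + λ₂β_E + μβ_E⁻¹ = 1. Then β_E < ρ⁻¹ < α_E, and consequently r := μ(β_E⁻¹ - α_E⁻¹) > 0. -/

import Mathlib

/-- Under both ray conditions, β_E < ρ⁻¹ < α_E and r = μ(β_E⁻¹ - α_E⁻¹) > 0. -/
theorem polling_lyapunov_rate_positive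
    (l1 l2 mu : ℝ) (hl1 : 0 < l1) (hl2 : 0 < l2) (hmu : 0 < mu)
    (hsum : l1 + l2 + mu = 1) (hstab : l1 + l2 < mu)
    (hray1 : (((l1 + l2) / mu))⁻¹ * l1 > l1 + l2)
    (hray2 : (((l1 + l2) / mu))⁻¹ * l2 > l1 + l2)
    (aE : ℝ)
    (haE : l1 * aE + l2 * Real.sqrt (mu / l2) + mu * (Real.sqrt (mu / l2))⁻¹ = 1) :
    Real.sqrt (mu / l2) < (((l1 + l2) / mu))⁻¹ ∧
    (((l1 + l2) / mu))⁻¹ < aE ∧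
    0 < mu * ((Real.sqrt (mu / l2))⁻¹ - aE⁻¹) := by
  have hL : 0 < l1 + l2 := by linarith
  rw [inv_div] at hray1 hray2 ⊢
  set s := Real.sqrt (mu / l2) with hsdef
  have hsl : 0 < mu / l2 := div_pos hmu hl2
  have hs : 0 < s := Real.sqrt_pos.mpr hsl
  have hs2 : s ^ 2 = mu / l2 := Real.sq_sqrt hsl.le
  have hmus : mu = l2 * s ^ 2 := by rw [hs2]; field_simp
  -- key2 : (l1+l2)^2 < l2 * mu
  have key2 : (l1 + l2) ^ 2 < l2 * mu := by
    have h := hray2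
    rw [div_mul_eq_mul_div, gt_iff_lt, lt_div_iff₀ hL] at h
    nlinarith
  set c := mu / (l1 + l2) with hcdef
  have hc : 0 < c := div_pos hmu hL
  -- first part
  have h1 : s < c := by
    rw [hsdef]
    rw [show s = Real.sqrt (mu / l2) from rfl] at *
    apply (Real.sqrt_lt' hc).mpr
    rw [div_lt_iff₀ hl2, hcdef, div_pow, div_mul_eq_mul_div, lt_div_iff₀ (by positivity : (0:ℝ) < (l1+l2)^2)]
    nlinarith
  -- μ s⁻¹ = l2 s
  have hmuinv : mu * s⁻¹ = l2 * s := by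
    rw [hmus]; field_simp
  have haE' : l1 * aE + 2 * (l2 * s) = 1 := by
    rw [hmuinv] at haE; linarith
  -- l1 c + l2 c + (l1+l2) = 1
  have hcc : l1 * c + l2 * c + (l1 + l2) = 1 := by
    rw [hcdef]; field_simp; linear_combination hsum
  -- AM-GM strict: l2*c + (l1+l2) > 2 * (l2*s)
  have hkey : 2 * (l2 * s) < l2 * c + (l1 + l2) := by
    have ht2 : (l2 * s) ^ 2 = (l2 * c) * (l1 + l2) := by
      rw [hcdef]; field_simp; nlinarith [hs2]
    have hylt : (l1 + l2) < l2 * c := by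
      rw [hcdef, ← mul_div_assoc, lt_div_iff₀ hL]
      nlinarith [key2]
    have hd : 0 < (l2 * c - (l1 + l2)) ^ 2 := pow_pos (sub_pos.mpr hylt) 2
    nlinarith [mul_pos hc hl2, hL, mul_pos hl2 hs]
  have h2 : c < aE := by
    have : l1 * c < l1 * aE := by linarith
    exact lt_of_mul_lt_mul_left this hl1.le
  have hsa : s < aE := lt_trans h1 h2
  have haE0 : 0 < aE := lt_trans hs hsa
  refine ⟨h1, h2, ?_⟩
  have : aE⁻¹ < s⁻¹ := by
    exact inv_strictAnti₀ hs hsa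
  exact mul_pos hmu (by linarith)
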